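/- Let n ≥ 1, let Ω ⊆ ℝⁿ be nonempty, bounded and open, and let Ω̂ ⊆ ℝⁿ be bounded open with closure(Ω) ⊆ Ω̂. Let (b_i)_{i∈ι} be a Hilbert basis of L²(Ω, ℂ), and suppose for each i there is a bounded continuous function ĥ_i : Ω̂ → ℂ with ‖ĥ_i‖_∞ ≤ K (for a fixed constant K > 0) whose restriction to Ω equals b_i almost everywhere. Let f : ι → ℂ be such that the family i ↦ |f i|² is summable, and let u ∈ L²(Ω, ℂ). Then the family i ↦ (f i · ⟨b_i, u⟩) • ĥ_i is summable in the Banach space of bounded continuous functions on Ω̂ equipped with the supremum norm. -/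

import Mathlib

open MeasureTheory

/-- Let `Ω ⊆ ℝⁿ` (`n ≥ 1`) be nonempty, bounded and open, and `Ω̂` bounded
open with `closure Ω ⊆ Ω̂`. Let `b` be a Hilbert basis of `L²(Ω, ℂ)` such that each `b i`
agrees a.e. on `Ω` with a bounded continuous function `h i : Ω̂ → ℂ` of sup norm at most a
fixed `K > 0`. If `i ↦ |f i|²` is summable and `u ∈ L²(Ω, ℂ)`, then the family
`i ↦ (f i · ⟨b i, u⟩) • h i` is summable in the Banach space of bounded continuous
functions on `Ω̂` with the sup norm. -/
theorem stmt_11 {n : ℕ} (hn : 1 ≤ n)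
    (Ω Ωh : Set (EuclideanSpace ℝ (Fin n)))
    (hΩne : Ω.Nonempty) (hΩo : IsOpen Ω) (hΩb : Bornology.IsBounded Ω)
    (hΩho : IsOpen Ωh) (hΩhb : Bornology.IsBounded Ωh)
    (hsub : closure Ω ⊆ Ωh)
    {ι : Type*} (b : HilbertBasis ι ℂ (Lp ℂ 2 (volume.restrict Ω)))
    (K : ℝ) (hK : 0 < K)
    (h : ι → BoundedContinuousFunction Ωh ℂ)
    (hhK : ∀ i : ι, ‖h i‖ ≤ K)
    (hae : ∀ i : ι, ∀ᵐ x ∂(volume.restrict Ω), ∀ hx : x ∈ Ωh, b i x = h i ⟨x, hx⟩)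
    (f : ι → ℂ) (hf : Summable fun i : ι => ‖f i‖ ^ 2)
    (u : Lp ℂ 2 (volume.restrict Ω)) :
    Summable fun i : ι => (f i * (inner ℂ (b i) u : ℂ)) • h i := by
  have hc : Summable fun i : ι => ‖(inner ℂ (b i) u : ℂ)‖ ^ 2 := by
    have := (b.hasSum_inner_mul_inner u u).summable.norm
    refine this.of_nonneg_of_le (fun i => by positivity) fun i => ?_
    rw [norm_mul, ← inner_conj_symm (b i) u, RCLike.norm_conj, sq]
  have hs : Summable fun i : ι => K * ((‖f i‖ ^ 2 + ‖(inner ℂ (b i) u : ℂ)‖ ^ 2) / 2) :=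
    ((hf.add hc).div_const 2).mul_left K
  refine Summable.of_norm (hs.of_nonneg_of_le (fun i => norm_nonneg _) fun i => ?_)
  calc ‖(f i * (inner ℂ (b i) u : ℂ)) • h i‖
      ≤ ‖f i * (inner ℂ (b i) u : ℂ)‖ * K := by
        rw [norm_smul]
        exact mul_le_mul_of_nonneg_left (hhK i) (norm_nonneg _)
    _ ≤ (‖f i‖ ^ 2 + ‖(inner ℂ (b i) u : ℂ)‖ ^ 2) / 2 * K := by
        rw [norm_mul]
        nlinarith [sq_nonneg (‖f i‖ - ‖(inner ℂ (b i) u : ℂ)‖), norm_nonneg (f i),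
          norm_nonneg (inner ℂ (b i) u : ℂ)]
    _ = K * ((‖f i‖ ^ 2 + ‖(inner ℂ (b i) u : ℂ)‖ ^ 2) / 2) := mul_comm _ _
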